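/- (Commutativity of hydrodynamic flows associated to an F-manifold with compatible flat connection.) Let U ⊆ ℝⁿ be open and let c^i_{jk} : U → ℝ be smooth functions that are symmetric in the lower indices (c^i_{jk} = c^i_{kj}), associative (Σ_m c^i_{jm} c^m_{kl} = Σ_m c^i_{km} c^m_{jl}), and satisfy ∂_l c^i_{jk} = ∂_j c^i_{lk} (flat coordinates of an F-manifold with compatible flat connection). Let X, Y : U → ℝⁿ be smooth vector fields satisfying Σ_m c^i_{jm} ∂_k X^m = Σ_m c^i_{km} ∂_j X^m and Σ_m c^i_{jm} ∂_k Y^m = Σ_m c^i_{km} ∂_j Y^m for all i, j, k. Then the evolutionary vector fields with components ξ^i = Σ_{j,k} c^i_{jk} X^k u^j_x and ζ^i = Σ_{j,k} c^i_{jk} Y^k u^j_x commute: their evolutionary Lie bracket [ξ,ζ]^p = Σ_{i,s} (∂_x^s ξ^i)(∂ζ^p/∂u^i_{(s)}) − (∂_x^s ζ^i)(∂ξ^p/∂u^i_{(s)}) vanishes identically. -/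

import Mathlib

open Finset

/-- The partial derivative `∂F/∂u^k` of a smooth function of `u = (u¹,…,uⁿ)`. -/
noncomputable def pder {n : ℕ} (F : (Fin n → ℝ) → ℝ) (k : Fin n)
    (x : Fin n → ℝ) : ℝ :=
  fderiv ℝ F x (Pi.single k 1)

/-- The components `B^i_j = Σ_k c^i_{jk} X^k` of the quasilinear flow
`u^i_t = c^i_{jk} X^k u^j_x`. -/
noncomputable def hydroCoeff {n : ℕ}
    (c : Fin n → Fin n → Fin n → (Fin n → ℝ) → ℝ)
    (X : Fin n → (Fin n → ℝ) → ℝ) (i j : Fin n) : (Fin n → ℝ) → ℝ :=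
  fun x => ∑ k, c i j k x * X k x

/-- The `p`-th component of the evolutionary Lie bracket
`[ξ,ζ]^p = Σ_{i,s} (∂_x^s ξ^i)(∂ζ^p/∂u^i_{(s)}) − (∂_x^s ζ^i)(∂ξ^p/∂u^i_{(s)})`
of the two evolutionary vector fields `ξ^i = Σ c^i_{jk} X^k u^j_x` and
`ζ^i = Σ c^i_{jk} Y^k u^j_x`, written out explicitly as a function of the
point `u = x` and of the jet variables `u_x = w`, `u_{xx} = z` (the bracket
depends only on `u, u_x, u_{xx}`, so the flows commute precisely when this
expression vanishes identically). -/
noncomputable def evolutionaryBracket {n : ℕ}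
    (c : Fin n → Fin n → Fin n → (Fin n → ℝ) → ℝ)
    (X Y : Fin n → (Fin n → ℝ) → ℝ) (p : Fin n)
    (x w z : Fin n → ℝ) : ℝ :=
  (∑ i,
      ((∑ j, hydroCoeff c X i j x * w j) *
          (∑ m, pder (hydroCoeff c Y p m) i x * w m)
        + ((∑ m, ∑ j, pder (hydroCoeff c X i j) m x * w m * w j)
            + ∑ j, hydroCoeff c X i j x * z j) * hydroCoeff c Y p i x))
    - ∑ i,
        ((∑ j, hydroCoeff c Y i j x * w j) *
            (∑ m, pder (hydroCoeff c X p m) i x * w m)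
          + ((∑ m, ∑ j, pder (hydroCoeff c Y i j) m x * w m * w j)
              + ∑ j, hydroCoeff c Y i j x * z j) * hydroCoeff c X p i x)


section StatementHelpers
variable {n : ℕ}

lemma pder_sum_mul (f g : Fin n → (Fin n → ℝ) → ℝ) (x : Fin n → ℝ) (i : Fin n)
    (hf : ∀ k, DifferentiableAt ℝ (f k) x) (hg : ∀ k, DifferentiableAt ℝ (g k) x) :
    pder (fun y => ∑ k, f k y * g k y) i x
      = ∑ k, (pder (f k) i x * g k x + f k x * pder (g k) i x) := by
  unfold pder
  rw [fderiv_fun_sum (A := fun k y => f k y * g k y) (fun k _ => (hf k).mul (hg k))]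
  rw [ContinuousLinearMap.sum_apply]
  refine Finset.sum_congr rfl fun k _ => ?_
  rw [fderiv_fun_mul (hf k) (hg k)]
  simp; ring


lemma tc12 (f : Fin n → Fin n → Fin n → ℝ) :
    ∑ a, ∑ b, ∑ c, f a b c = ∑ b, ∑ a, ∑ c, f a b c := Finset.sum_comm

lemma tc23 (f : Fin n → Fin n → Fin n → ℝ) :
    ∑ a, ∑ b, ∑ c, f a b c = ∑ a, ∑ c, ∑ b, f a b c :=
  Finset.sum_congr rfl fun _ _ => Finset.sum_comm

lemma L4 (f g : Fin n → Fin n → ℝ) :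
    ∑ i, (∑ k, f i k) * (∑ l, g i l) = ∑ k, ∑ l, ∑ i, f i k * g i l := by
  have h1 : ∑ i, (∑ k, f i k) * (∑ l, g i l) = ∑ i, ∑ l, ∑ k, f i k * g i l := by
    simp only [Finset.sum_mul, Finset.mul_sum]
  rw [h1, tc23 (fun i l k => f i k * g i l), tc12 (fun i k l => f i k * g i l),
      tc23 (fun k i l => f i k * g i l)]

lemma L1 (w : Fin n → ℝ) (a b : Fin n → Fin n → ℝ) :
    ∑ i, (∑ j, a i j * w j) * (∑ m, b i m * w m)
      = ∑ j, ∑ m, (∑ i, a i j * b i m) * (w j * w m) := by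
  rw [L4]
  refine Finset.sum_congr rfl fun j _ => Finset.sum_congr rfl fun m _ => ?_
  rw [Finset.sum_mul]
  exact Finset.sum_congr rfl fun i _ => by ring

lemma L2 (w : Fin n → ℝ) (d : Fin n → Fin n → Fin n → ℝ) (e : Fin n → ℝ) :
    ∑ i, (∑ m, ∑ j, d i j m * w m * w j) * e i
      = ∑ j, ∑ m, (∑ i, d i j m * e i) * (w j * w m) := by
  have h1 : ∑ i, (∑ m, ∑ j, d i j m * w m * w j) * e i
      = ∑ i, ∑ m, ∑ j, d i j m * w m * w j * e i := by
    simp only [Finset.sum_mul]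
  rw [h1, tc23 (fun i m j => d i j m * w m * w j * e i),
      tc12 (fun i j m => d i j m * w m * w j * e i),
      tc23 (fun j i m => d i j m * w m * w j * e i)]
  refine Finset.sum_congr rfl fun j _ => Finset.sum_congr rfl fun m _ => ?_
  rw [Finset.sum_mul]
  exact Finset.sum_congr rfl fun i _ => by ring

lemma L3 (z : Fin n → ℝ) (a : Fin n → Fin n → ℝ) (e : Fin n → ℝ) :
    ∑ i, (∑ j, a i j * z j) * e i = ∑ j, (∑ i, a i j * e i) * z j := by
  have h1 : ∑ i, (∑ j, a i j * z j) * e i = ∑ i, ∑ j, a i j * z j * e i := by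
    simp only [Finset.sum_mul]
  rw [h1, Finset.sum_comm]
  refine Finset.sum_congr rfl fun j _ => ?_
  rw [Finset.sum_mul]
  exact Finset.sum_congr rfl fun i _ => by ring


lemma tc12' (f : Fin n → Fin n → Fin n → ℝ) :
    ∑ a, ∑ b, ∑ c, f a b c = ∑ b, ∑ a, ∑ c, f a b c := Finset.sum_comm

lemma tc23' (f : Fin n → Fin n → Fin n → ℝ) :
    ∑ a, ∑ b, ∑ c, f a b c = ∑ a, ∑ c, ∑ b, f a b c :=
  Finset.sum_congr rfl fun _ _ => Finset.sum_comm

lemma fact2' (s t : Fin n → ℝ) (u v : ℝ) :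
    ∑ i, (s i * u) * (t i * v) = (∑ i, s i * t i) * (u * v) := by
  rw [Finset.sum_mul]; exact Finset.sum_congr rfl fun i _ => by ring

lemma pairEq (p : Fin n) (C : Fin n → Fin n → Fin n → ℝ)
    (V : Fin n → ℝ) (E : Fin n → Fin n → ℝ)
    (Passoc' : ∀ j k l, ∑ i, C i j k * C p i l = ∑ i, C i j l * C p i k)
    (hE : ∀ q a b, ∑ m, C q a m * E m b = ∑ m, C q b m * E m a)
    (j m : Fin n) :
    ∑ k, ∑ l, ∑ i, C i j k * V k * (C p m l * E l i)
      = ∑ k, ∑ l, ∑ i, C i j k * E k m * (C p i l * V l) := by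
  calc ∑ k, ∑ l, ∑ i, C i j k * V k * (C p m l * E l i)
      = ∑ k, ∑ i, ∑ l, C i j k * V k * (C p m l * E l i) :=
        tc23' (fun k l i => C i j k * V k * (C p m l * E l i))
    _ = ∑ k, ∑ i, ∑ l, C i j k * V k * (C p i l * E l m) := by
        refine Finset.sum_congr rfl fun k _ => Finset.sum_congr rfl fun i _ => ?_
        rw [← Finset.mul_sum, hE p m i, Finset.mul_sum]
    _ = ∑ k, ∑ l, ∑ i, C i j k * V k * (C p i l * E l m) :=
        (tc23' (fun k l i => C i j k * V k * (C p i l * E l m))).symm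
    _ = ∑ k, ∑ l, (∑ i, C i j k * C p i l) * (V k * E l m) := by
        refine Finset.sum_congr rfl fun k _ => Finset.sum_congr rfl fun l _ => ?_
        exact fact2' (fun i => C i j k) (fun i => C p i l) (V k) (E l m)
    _ = ∑ k, ∑ l, (∑ i, C i j l * C p i k) * (V k * E l m) := by
        refine Finset.sum_congr rfl fun k _ => Finset.sum_congr rfl fun l _ => ?_
        rw [Passoc' j k l]
    _ = ∑ k, ∑ l, ∑ i, C i j l * E l m * (C p i k * V k) := by
        refine Finset.sum_congr rfl fun k _ => Finset.sum_congr rfl fun l _ => ?_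
        rw [fact2' (fun i => C i j l) (fun i => C p i k) (E l m) (V k)]
        ring
    _ = ∑ k, ∑ l, ∑ i, C i j k * E k m * (C p i l * V l) :=
        tc12' (fun k l i => C i j l * E l m * (C p i k * V k))

lemma geomPair (p : Fin n) (C : Fin n → Fin n → Fin n → ℝ)
    (D : Fin n → Fin n → Fin n → Fin n → ℝ) (Xv Yv : Fin n → ℝ)
    (Geom : ∀ j m k l, ∑ i, (C i j k * D p m l i + D i j k m * C p i l)
        = ∑ i, (C i j l * D p m k i + D i j l m * C p i k))
    (j m : Fin n) :
    ∑ k, ∑ l, ∑ i, C i j k * Xv k * (D p m l i * Yv l)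
      + ∑ k, ∑ l, ∑ i, D i j k m * Xv k * (C p i l * Yv l)
      = ∑ k, ∑ l, ∑ i, C i j k * Yv k * (D p m l i * Xv l)
        + ∑ k, ∑ l, ∑ i, D i j k m * Yv k * (C p i l * Xv l) := by
  have comb : ∀ (Uv Vv : Fin n → ℝ),
      ∑ k, ∑ l, ∑ i, C i j k * Uv k * (D p m l i * Vv l)
        + ∑ k, ∑ l, ∑ i, D i j k m * Uv k * (C p i l * Vv l)
      = ∑ k, ∑ l, (∑ i, (C i j k * D p m l i + D i j k m * C p i l)) * (Uv k * Vv l) := by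
    intro Uv Vv
    rw [← Finset.sum_add_distrib]
    refine Finset.sum_congr rfl fun k _ => ?_
    rw [← Finset.sum_add_distrib]
    refine Finset.sum_congr rfl fun l _ => ?_
    rw [fact2' (fun i => C i j k) (fun i => D p m l i) (Uv k) (Vv l),
        fact2' (fun i => D i j k m) (fun i => C p i l) (Uv k) (Vv l),
        ← add_mul, ← Finset.sum_add_distrib]
  rw [comb Xv Yv, comb Yv Xv]
  calc ∑ k, ∑ l, (∑ i, (C i j k * D p m l i + D i j k m * C p i l)) * (Xv k * Yv l)
      = ∑ k, ∑ l, (∑ i, (C i j l * D p m k i + D i j l m * C p i k)) * (Xv k * Yv l) := by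
        refine Finset.sum_congr rfl fun k _ => Finset.sum_congr rfl fun l _ => ?_
        rw [Geom j m k l]
    _ = ∑ l, ∑ k, (∑ i, (C i j l * D p m k i + D i j l m * C p i k)) * (Xv k * Yv l) :=
        Finset.sum_comm
    _ = ∑ k, ∑ l, (∑ i, (C i j k * D p m l i + D i j k m * C p i l)) * (Yv k * Xv l) := by
        refine Finset.sum_congr rfl fun a _ => Finset.sum_congr rfl fun b _ => ?_
        ring

lemma fact2 (s t : Fin n → ℝ) (u v : ℝ) :
    ∑ i, (s i * u) * (t i * v) = (∑ i, s i * t i) * (u * v) := by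
  rw [Finset.sum_mul]; exact Finset.sum_congr rfl fun i _ => by ring

lemma key (p : Fin n) (C : Fin n → Fin n → Fin n → ℝ)
    (D : Fin n → Fin n → Fin n → Fin n → ℝ)
    (Xv Yv : Fin n → ℝ) (EX EY : Fin n → Fin n → ℝ) (w z : Fin n → ℝ)
    (Passoc : ∀ q j k l, ∑ i, C q i l * C i j k = ∑ i, C q i k * C i j l)
    (Geom : ∀ j m k l, ∑ i, (C i j k * D p m l i + D i j k m * C p i l)
        = ∑ i, (C i j l * D p m k i + D i j l m * C p i k))
    (hXa : ∀ q j k, ∑ m, C q j m * EX m k = ∑ m, C q k m * EX m j)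
    (hYa : ∀ q j k, ∑ m, C q j m * EY m k = ∑ m, C q k m * EY m j) :
    (∑ i, ((∑ j, (∑ k, C i j k * Xv k) * w j) *
          (∑ m, (∑ l, (D p m l i * Yv l + C p m l * EY l i)) * w m)
      + ((∑ m, ∑ j, (∑ k, (D i j k m * Xv k + C i j k * EX k m)) * w m * w j)
          + ∑ j, (∑ k, C i j k * Xv k) * z j) * (∑ l, C p i l * Yv l)))
    = (∑ i, ((∑ j, (∑ k, C i j k * Yv k) * w j) *
          (∑ m, (∑ l, (D p m l i * Xv l + C p m l * EX l i)) * w m)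
      + ((∑ m, ∑ j, (∑ k, (D i j k m * Yv k + C i j k * EY k m)) * w m * w j)
          + ∑ j, (∑ k, C i j k * Yv k) * z j) * (∑ l, C p i l * Xv l))) := by
  have Passoc' : ∀ j k l, ∑ i, C i j k * C p i l = ∑ i, C i j l * C p i k := by
    intro j k l
    calc ∑ i, C i j k * C p i l = ∑ i, C p i l * C i j k :=
          Finset.sum_congr rfl fun i _ => mul_comm _ _
      _ = ∑ i, C p i k * C i j l := Passoc p j k l
      _ = ∑ i, C i j l * C p i k := Finset.sum_congr rfl fun i _ => mul_comm _ _
  -- generic splitting of each side into canonical quadratic + z parts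
  have split : ∀ (a b : Fin n → Fin n → ℝ) (d : Fin n → Fin n → Fin n → ℝ)
      (e : Fin n → ℝ),
      ∑ i, ((∑ j, a i j * w j) * (∑ m, b i m * w m)
        + ((∑ m, ∑ j, d i j m * w m * w j) + ∑ j, a i j * z j) * e i)
      = (∑ j, ∑ m, (∑ i, (a i j * b i m + d i j m * e i)) * (w j * w m))
        + ∑ j, (∑ i, a i j * e i) * z j := by
    intro a b d e
    have h1 : ∑ i, ((∑ j, a i j * w j) * (∑ m, b i m * w m)
        + ((∑ m, ∑ j, d i j m * w m * w j) + ∑ j, a i j * z j) * e i)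
        = (∑ i, (∑ j, a i j * w j) * (∑ m, b i m * w m))
          + ((∑ i, (∑ m, ∑ j, d i j m * w m * w j) * e i)
            + ∑ i, (∑ j, a i j * z j) * e i) := by
      rw [← Finset.sum_add_distrib, ← Finset.sum_add_distrib]
      exact Finset.sum_congr rfl fun i _ => by ring
    rw [h1, L1 w a b, L2 w d e, L3 z a e, ← add_assoc]
    congr 1
    rw [← Finset.sum_add_distrib]
    refine Finset.sum_congr rfl fun j _ => ?_
    rw [← Finset.sum_add_distrib]
    refine Finset.sum_congr rfl fun m _ => ?_
    rw [← add_mul, ← Finset.sum_add_distrib]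
  rw [split, split]
  congr 1
  · -- quadratic part
    refine Finset.sum_congr rfl fun j _ => Finset.sum_congr rfl fun m _ => ?_
    congr 1
    -- goal : ∑ i, (aX*bY + dX*eY) = ∑ i, (aY*bX + dY*eX)
    rw [Finset.sum_add_distrib, Finset.sum_add_distrib, L4, L4, L4, L4]
    -- split the two-term inner monomials
    simp only [mul_add, add_mul, Finset.sum_add_distrib]
    have h1 := geomPair p C D Xv Yv Geom j m
    have h2 := pairEq p C Xv EY Passoc' hYa j m
    have h3 := pairEq p C Yv EX Passoc' hXa j m
    linarith [h1, h2, h3]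
  · -- z part
    refine Finset.sum_congr rfl fun j _ => ?_
    congr 1
    rw [L4, L4, tc12 (fun k l i => (C i j k * Yv k) * (C p i l * Xv l))]
    refine Finset.sum_congr rfl fun k _ => Finset.sum_congr rfl fun l _ => ?_
    rw [fact2, fact2, Passoc' j k l]
    ring

end StatementHelpers

/-- **commutativity of hydrodynamic flows associated to an
F-manifold with compatible flat connection.** Let `U ⊆ ℝⁿ` be open and let
`c^i_{jk} : U → ℝ` be smooth, symmetric in the lower indices, associative and
satisfying `∂_l c^i_{jk} = ∂_j c^i_{lk}`. Let `X, Y : U → ℝⁿ` be smooth vector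
fields satisfying `Σ_m c^i_{jm} ∂_k X^m = Σ_m c^i_{km} ∂_j X^m` (and the same
for `Y`). Then the evolutionary vector fields with components
`ξ^i = Σ c^i_{jk} X^k u^j_x` and `ζ^i = Σ c^i_{jk} Y^k u^j_x` commute: their
evolutionary Lie bracket vanishes identically. -/
theorem hydrodynamic_flows_commute {n : ℕ} (hn : 1 ≤ n)
    (U : Set (Fin n → ℝ)) (hU : IsOpen U)
    (c : Fin n → Fin n → Fin n → (Fin n → ℝ) → ℝ)
    (hc_smooth : ∀ i j k, ContDiffOn ℝ (⊤ : ℕ∞) (c i j k) U)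
    (hc_symm : ∀ i j k, ∀ x ∈ U, c i j k x = c i k j x)
    (hc_assoc : ∀ i j k l, ∀ x ∈ U,
      ∑ m, c i j m x * c m k l x = ∑ m, c i k m x * c m j l x)
    (hc_flat : ∀ i j k l, ∀ x ∈ U,
      pder (c i j k) l x = pder (c i l k) j x)
    (X Y : Fin n → (Fin n → ℝ) → ℝ)
    (hX_smooth : ∀ i, ContDiffOn ℝ (⊤ : ℕ∞) (X i) U)
    (hY_smooth : ∀ i, ContDiffOn ℝ (⊤ : ℕ∞) (Y i) U)
    (hX : ∀ i j k, ∀ x ∈ U,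
      ∑ m, c i j m x * pder (X m) k x = ∑ m, c i k m x * pder (X m) j x)
    (hY : ∀ i j k, ∀ x ∈ U,
      ∑ m, c i j m x * pder (Y m) k x = ∑ m, c i k m x * pder (Y m) j x) :
    ∀ p : Fin n, ∀ x ∈ U, ∀ w z : Fin n → ℝ,
      evolutionaryBracket c X Y p x w z = 0 := by

  intro p x hx w z
  have hdc : ∀ i j k, DifferentiableAt ℝ (c i j k) x := fun i j k =>
    ((hc_smooth i j k).contDiffAt (hU.mem_nhds hx)).differentiableAt (by norm_num)
  have hdX : ∀ k, DifferentiableAt ℝ (X k) x := fun k =>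
    ((hX_smooth k).contDiffAt (hU.mem_nhds hx)).differentiableAt (by norm_num)
  have hdY : ∀ k, DifferentiableAt ℝ (Y k) x := fun k =>
    ((hY_smooth k).contDiffAt (hU.mem_nhds hx)).differentiableAt (by norm_num)
  have hpdX : ∀ i j m, pder (hydroCoeff c X i j) m x
      = ∑ k, (pder (c i j k) m x * X k x + c i j k x * pder (X k) m x) := fun i j m =>
    pder_sum_mul (fun k => c i j k) X x m (fun k => hdc i j k) hdX
  have hpdY : ∀ i j m, pder (hydroCoeff c Y i j) m x
      = ∑ k, (pder (c i j k) m x * Y k x + c i j k x * pder (Y k) m x) := fun i j m =>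
    pder_sum_mul (fun k => c i j k) Y x m (fun k => hdc i j k) hdY
  have Passoc_on : ∀ y ∈ U, ∀ q j k l,
      ∑ i, c q i l y * c i j k y = ∑ i, c q i k y * c i j l y := by
    intro y hy q j k l
    calc ∑ i, c q i l y * c i j k y
        = ∑ i, c q l i y * c i j k y := by
          refine Finset.sum_congr rfl fun i _ => ?_
          rw [hc_symm q i l y hy]
      _ = ∑ i, c q j i y * c i l k y := hc_assoc q l j k y hy
      _ = ∑ i, c q j i y * c i k l y := by
          refine Finset.sum_congr rfl fun i _ => ?_
          rw [hc_symm i l k y hy]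
      _ = ∑ i, c q k i y * c i j l y := hc_assoc q j k l y hy
      _ = ∑ i, c q i k y * c i j l y := by
          refine Finset.sum_congr rfl fun i _ => ?_
          rw [hc_symm q k i y hy]
  have Passoc : ∀ q j k l, ∑ i, c q i l x * c i j k x = ∑ i, c q i k x * c i j l x :=
    fun q j k l => Passoc_on x hx q j k l
  have Qeq : ∀ q j k l m0,
      ∑ i, (pder (c q i l) m0 x * c i j k x + c q i l x * pder (c i j k) m0 x)
        = ∑ i, (pder (c q i k) m0 x * c i j l x + c q i k x * pder (c i j l) m0 x) := by
    intro q j k l m0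
    have h1 : pder (fun y => ∑ i, c q i l y * c i j k y) m0 x
        = pder (fun y => ∑ i, c q i k y * c i j l y) m0 x := by
      unfold pder
      congr 1
      apply Filter.EventuallyEq.fderiv_eq
      exact Filter.eventuallyEq_of_mem (hU.mem_nhds hx)
        (fun y hy => Passoc_on y hy q j k l)
    have e1 : pder (fun y => ∑ i, c q i l y * c i j k y) m0 x
        = ∑ i, (pder (c q i l) m0 x * c i j k x + c q i l x * pder (c i j k) m0 x) :=
      pder_sum_mul (fun i => c q i l) (fun i => c i j k) x m0
        (fun i => hdc q i l) (fun i => hdc i j k)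
    have e2 : pder (fun y => ∑ i, c q i k y * c i j l y) m0 x
        = ∑ i, (pder (c q i k) m0 x * c i j l x + c q i k x * pder (c i j l) m0 x) :=
      pder_sum_mul (fun i => c q i k) (fun i => c i j l) x m0
        (fun i => hdc q i k) (fun i => hdc i j l)
    rw [e1, e2] at h1
    exact h1
  have Geom : ∀ j m0 k l,
      ∑ i, (c i j k x * pder (c p m0 l) i x + pder (c i j k) m0 x * c p i l x)
        = ∑ i, (c i j l x * pder (c p m0 k) i x + pder (c i j l) m0 x * c p i k x) := by
    intro j m0 k l
    calc ∑ i, (c i j k x * pder (c p m0 l) i x + pder (c i j k) m0 x * c p i l x)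
        = ∑ i, (pder (c p i l) m0 x * c i j k x + c p i l x * pder (c i j k) m0 x) := by
          refine Finset.sum_congr rfl fun i _ => ?_
          rw [hc_flat p m0 l i x hx]
          ring
      _ = ∑ i, (pder (c p i k) m0 x * c i j l x + c p i k x * pder (c i j l) m0 x) :=
          Qeq p j k l m0
      _ = ∑ i, (c i j l x * pder (c p m0 k) i x + pder (c i j l) m0 x * c p i k x) := by
          refine Finset.sum_congr rfl fun i _ => ?_
          rw [hc_flat p m0 k i x hx]
          ring
  have hXa : ∀ q j k, ∑ m, c q j m x * pder (X m) k x = ∑ m, c q k m x * pder (X m) j x :=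
    fun q j k => hX q j k x hx
  have hYa : ∀ q j k, ∑ m, c q j m x * pder (Y m) k x = ∑ m, c q k m x * pder (Y m) j x :=
    fun q j k => hY q j k x hx
  unfold evolutionaryBracket
  rw [sub_eq_zero]
  simp only [hpdX, hpdY]
  exact key p (fun i j k => c i j k x) (fun i j k l => pder (c i j k) l x)
    (fun k => X k x) (fun k => Y k x)
    (fun k l => pder (X k) l x) (fun k l => pder (Y k) l x) w z
    Passoc Geom hXa hYa
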